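/- arXiv:1501.04620 — 13 statements merged into one kernel-verified Lean document; each statement's English description precedes it below -/
import Mathlib

section
/- A loop (Q,·) with self-map σ is a σ-generalized (right) Bol loop if and only if for every x in Q the triple (R_x^{-1}, L_x R_{σ(x)}, R_{σ(x)}) is an autotopism of (Q,·). -/
/-- A loop: a magma with two-sided identity whose translations are bijections. -/
structure IsLoop (Q : Type*) [Mul Q] [One Q] : Prop where
  one_mul : ∀ x : Q, 1 * x = x
  mul_one : ∀ x : Q, x * 1 = x
  lbij : ∀ x : Q, Function.Bijective (fun y : Q => x * y)
  rbij : ∀ x : Q, Function.Bijective (fun y : Q => y * x)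

/-- Left translation `L x : y ↦ x * y` as a permutation. -/
noncomputable def Lt {Q : Type*} [Mul Q] [One Q] (h : IsLoop Q) (x : Q) : Equiv.Perm Q :=
  Equiv.ofBijective _ (h.lbij x)

/-- Right translation `R x : y ↦ y * x` as a permutation. -/
noncomputable def Rt {Q : Type*} [Mul Q] [One Q] (h : IsLoop Q) (x : Q) : Equiv.Perm Q :=
  Equiv.ofBijective _ (h.rbij x)

/-- The right inverse `x^ρ`, the unique solution of `x * x^ρ = 1`. -/
noncomputable def rinv {Q : Type*} [Mul Q] [One Q] (h : IsLoop Q) (x : Q) : Q :=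
  (Lt h x).symm 1

/-- The left inverse `x^λ`, the unique solution of `x^λ * x = 1`. -/
noncomputable def linv {Q : Type*} [Mul Q] [One Q] (h : IsLoop Q) (x : Q) : Q :=
  (Rt h x).symm 1

/-- σ-generalized (right) Bol identity. -/
def RightBol {Q : Type*} [Mul Q] (σ : Q → Q) : Prop :=
  ∀ x y z : Q, ((x * y) * z) * σ y = x * ((y * z) * σ y)

/-- σ-generalized left Bol identity. -/
def LeftBol {Q : Type*} [Mul Q] (σ : Q → Q) : Prop :=
  ∀ x y z : Q, σ y * (z * (y * x)) = (σ y * (z * y)) * x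

/-- `(A,B,C)` is an autotopism: `A x * B y = C (x * y)`. -/
def Autotopism {Q : Type*} [Mul Q] (A B C : Equiv.Perm Q) : Prop :=
  ∀ x y : Q, A x * B y = C (x * y)

/-- A loop is a σ-generalized right Bol loop iff
`(R_x⁻¹, L_x R_{σ x}, R_{σ x})` is an autotopism for every `x`. -/
theorem stmt0 {Q : Type*} [Mul Q] [One Q] (h : IsLoop Q) (σ : Q → Q) :
    RightBol σ ↔
      ∀ x : Q, Autotopism ((Rt h x).symm) ((Lt h x).trans (Rt h (σ x))) (Rt h (σ x)) := by
  have hRt : ∀ x a : Q, Rt h x a = a * x := fun _ _ => rfl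
  have hLt : ∀ x a : Q, Lt h x a = x * a := fun _ _ => rfl
  have hsymm : ∀ x a : Q, (Rt h x).symm a * x = a := fun x a => (Rt h x).apply_symm_apply a
  constructor
  · intro hb x a b
    simp only [Equiv.trans_apply, hRt, hLt]
    have := hb ((Rt h x).symm a) x b
    rw [hsymm] at this
    exact this.symm
  · intro ha u x z
    have := ha x ((Rt h x) u) z
    rw [Equiv.symm_apply_apply] at this
    simp only [Equiv.trans_apply, hRt, hLt] at this
    exact this.symm
end

section
/- Every σ-generalized (right) Bol loop satisfies the right inverse property: (y·x)·x^ρ = y for all x,y, where x^ρ is the right inverse of x. -/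
/-- Every σ-generalized right Bol loop has the right inverse property. -/
theorem stmt1 {Q : Type*} [Mul Q] [One Q] (h : IsLoop Q) (σ : Q → Q)
    (hB : RightBol σ) : ∀ x y : Q, (y * x) * rinv h x = y := by
  intro x y
  have hx : x * rinv h x = 1 := by
    have := (Lt h x).apply_symm_apply 1
    simpa [Lt, rinv, Equiv.ofBijective] using this
  have key := hB y x (rinv h x)
  rw [hx, h.one_mul] at key
  exact (h.rbij (σ x)).1 key
end

section
/- In a σ-generalized (right) Bol loop, the left inverse and right inverse of every element coincide: x^λ = x^ρ for all x. -/
/-- In a σ-generalized right Bol loop, left and right inverses coincide. -/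
theorem stmt2 {Q : Type*} [Mul Q] [One Q] (h : IsLoop Q) (σ : Q → Q)
    (hB : RightBol σ) : ∀ x : Q, linv h x = rinv h x := by
  intro x
  have hl : linv h x * x = 1 := (Rt h x).apply_symm_apply 1
  have hr : x * rinv h x = 1 := (Lt h x).apply_symm_apply 1
  have key := hB (linv h x) x (rinv h x)
  rw [hl, hr, h.one_mul, h.one_mul] at key
  exact ((h.rbij (σ x)).1 key).symm
end

section
/- In a σ-generalized (right) Bol loop, ((x·y)·σ(x))^{-1} = (σ(x)^{-1}·y^{-1})·x^{-1} for all x,y, where z^{-1} denotes the two-sided inverse (which exists since x^λ = x^ρ). -/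
section Aux
variable {Q : Type*} [Mul Q] [One Q] (h : IsLoop Q)

lemma mul_rinv (x : Q) : x * rinv h x = 1 := by
  have := (Lt h x).apply_symm_apply 1
  simpa [rinv, Lt, Equiv.ofBijective] using this

lemma linv_mul (x : Q) : linv h x * x = 1 := by
  have := (Rt h x).apply_symm_apply 1
  simpa [linv, Rt, Equiv.ofBijective] using this

lemma rinv_eq_of_mul {x w : Q} (hw : x * w = 1) : rinv h x = w := by
  have := (h.lbij x).injective (a₁ := rinv h x) (a₂ := w)
  exact this (by simpa [mul_rinv h x] using hw.symm)

lemma linv_eq_of_mul {x w : Q} (hw : w * x = 1) : linv h x = w := by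
  have := (h.rbij x).injective (a₁ := linv h x) (a₂ := w)
  exact this (by simpa [linv_mul h x] using hw.symm)

variable (σ : Q → Q) (hB : RightBol σ)
include hB

lemma rip (a x : Q) : (a * x) * rinv h x = a := by
  have e := hB a x (rinv h x)
  rw [mul_rinv h x, h.one_mul] at e
  exact (h.rbij (σ x)).injective e

lemma linv_eq_rinv (x : Q) : linv h x = rinv h x := by
  have := rip h σ hB (linv h x) x
  rw [linv_mul h x, h.one_mul] at this
  exact this.symm

lemma rinv_rinv (x : Q) : rinv h (rinv h x) = x := by
  rw [← linv_eq_rinv h σ hB]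
  exact linv_eq_of_mul h (mul_rinv h x)

lemma rip' (a x : Q) : (a * rinv h x) * x = a := by
  have := rip h σ hB a (rinv h x)
  rwa [rinv_rinv h σ hB] at this

end Aux

/-- In a σ-generalized right Bol loop,
`((x·y)·σ(x))⁻¹ = (σ(x)⁻¹ · y⁻¹) · x⁻¹` (inverses are two-sided). -/
theorem stmt4 {Q : Type*} [Mul Q] [One Q] (h : IsLoop Q) (σ : Q → Q)
    (hB : RightBol σ) :
    ∀ x y : Q, rinv h ((x * y) * σ x) = (rinv h (σ x) * rinv h y) * rinv h x := by
  intro x y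
  set W := (rinv h (σ x) * rinv h y) * rinv h x with hW
  have key : W * ((x * y) * σ x) = 1 := by
    have e := hB W x y
    rw [rip' h σ hB _ x, rip' h σ hB _ y] at e
    rw [← e, ← linv_eq_rinv h σ hB, linv_mul]
  rw [← linv_eq_rinv h σ hB]
  exact linv_eq_of_mul h key
end

section
/- In a σ-generalized (right) Bol loop, for every y the triple (R_{y^{-1}}, L_y R_{σ(y)}, R_{σ(y)}) is an autotopism. -/
lemma mul_rinv' {Q : Type*} [Mul Q] [One Q] (h : IsLoop Q) (y : Q) :
    y * rinv h y = 1 := by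
  have := (Lt h y).apply_symm_apply 1
  simpa [Lt, rinv, Equiv.ofBijective] using this

lemma rip'_s5 {Q : Type*} [Mul Q] [One Q] (h : IsLoop Q) (σ : Q → Q)
    (hB : RightBol σ) (x y : Q) : (x * y) * rinv h y = x := by
  have hb := hB x y (rinv h y)
  rw [mul_rinv' h y, h.one_mul] at hb
  exact (h.rbij (σ y)).1 hb

lemma rinv_rinv' {Q : Type*} [Mul Q] [One Q] (h : IsLoop Q) (σ : Q → Q)
    (hB : RightBol σ) (y : Q) : rinv h (rinv h y) = y := by
  have := rip'_s5 h σ hB y (rinv h y)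
  rwa [mul_rinv' h y, h.one_mul] at this

/-- In a σ-generalized right Bol loop, `(R_{y⁻¹}, L_y R_{σ(y)}, R_{σ(y)})`
is an autotopism for every `y`. -/
theorem stmt5 {Q : Type*} [Mul Q] [One Q] (h : IsLoop Q) (σ : Q → Q)
    (hB : RightBol σ) :
    ∀ y : Q, Autotopism (Rt h (rinv h y)) ((Lt h y).trans (Rt h (σ y))) (Rt h (σ y)) := by
  intro y x z
  show (x * rinv h y) * ((y * z) * σ y) = (x * z) * σ y
  have hb := hB (x * rinv h y) y z
  have hx : (x * rinv h y) * y = x := by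
    have := rip'_s5 h σ hB x (rinv h y)
    rwa [rinv_rinv' h σ hB y] at this
  rw [hx] at hb
  exact hb.symm
end

section
/- Every σ-generalized left Bol loop (half Bol loop) satisfies the left inverse property: x^λ·(x·y) = y for all x,y. -/
/-- Every σ-generalized left Bol loop has the left inverse property. -/
theorem stmt6 {Q : Type*} [Mul Q] [One Q] (h : IsLoop Q) (σ : Q → Q)
    (hB : LeftBol σ) : ∀ x y : Q, linv h x * (x * y) = y := by
  intro x y
  have hlinv : linv h x * x = 1 := (Rt h x).apply_symm_apply 1
  have := hB y x (linv h x)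
  rw [hlinv, h.mul_one] at this
  exact (h.lbij (σ x)).1 this
end

section
/- A loop with self-map σ is a σ-M-loop (satisfies (x·y)·(z·σ(x)) = (x·(y·z))·σ(x)) if and only if it is both a σ-generalized left Bol loop and a σ-generalized right Bol loop. -/
section helpers
variable {Q : Type*} [Mul Q] [One Q]

private lemma loop_lcan (h : IsLoop Q) {x a b : Q} (e : x * a = x * b) : a = b :=
  (h.lbij x).1 e

private lemma loop_rcan (h : IsLoop Q) {x a b : Q} (e : a * x = b * x) : a = b :=
  (h.rbij x).1 e

private lemma loop_mul_rinv (h : IsLoop Q) (x : Q) : x * rinv h x = 1 :=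
  (Lt h x).apply_symm_apply 1

private lemma loop_linv_mul (h : IsLoop Q) (x : Q) : linv h x * x = 1 :=
  (Rt h x).apply_symm_apply 1

end helpers

/-- A loop is a σ-M-loop iff it is both a σ-generalized left Bol loop
and a σ-generalized right Bol loop. -/
theorem stmt8 {Q : Type*} [Mul Q] [One Q] (h : IsLoop Q) (σ : Q → Q) :
    (∀ x y z : Q, (x * y) * (z * σ x) = (x * (y * z)) * σ x) ↔
      (LeftBol σ ∧ RightBol σ) := by
  constructor
  · -- Forward direction: M ⇒ LeftBol ∧ RightBol
    intro M
    have rinv1 : ∀ x : Q, x * rinv h x = 1 := loop_mul_rinv h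
    -- left inverse property, part 1
    have lip1 : ∀ x z : Q, x * (rinv h x * z) = z := by
      intro x z
      have e := M x (rinv h x) z
      rw [rinv1 x, h.one_mul] at e
      exact (loop_rcan h e).symm
    -- left inverse property, part 2
    have lip2 : ∀ x z : Q, rinv h x * (x * z) = z := by
      intro x z
      exact loop_lcan h (lip1 x (x * z))
    have rinv_mul : ∀ x : Q, rinv h x * x = 1 := by
      intro x
      have e := lip2 x 1
      rwa [h.mul_one] at e
    have invinv : ∀ x : Q, rinv h (rinv h x) = x := by
      intro x
      exact loop_lcan h ((rinv1 (rinv h x)).trans (rinv_mul x).symm)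
    -- E1 : (y*a) * ((a⁻¹*z) * σ y) = (y*z) * σ y
    have E1 : ∀ y a z : Q, (y * a) * ((rinv h a * z) * σ y) = (y * z) * σ y := by
      intro y a z
      have e := M y a (rinv h a * z)
      rw [lip1 a z] at e
      exact e
    -- anti-automorphism : (y*a)⁻¹ = a⁻¹ * y⁻¹
    have anti : ∀ y a : Q, rinv h (y * a) = rinv h a * rinv h y := by
      intro y a
      have e1 := E1 y a (rinv h y)
      rw [rinv1 y, h.one_mul] at e1
      have e2 := lip1 (y * a) (σ y)
      have e3 := loop_lcan h (e1.trans e2.symm)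
      exact (loop_rcan h e3).symm
    -- right inverse property
    have rip : ∀ a y : Q, (a * y) * rinv h y = a := by
      intro a y
      have e : rinv h ((a * y) * rinv h y) = rinv h a := by
        rw [anti (a * y) (rinv h y), invinv y, anti a y]
        exact lip1 y (rinv h a)
      have e2 := congrArg (rinv h) e
      rwa [invinv ((a * y) * rinv h y), invinv a] at e2
    have rip' : ∀ a y : Q, (a * rinv h y) * y = a := by
      intro a y
      have e := rip a (rinv h y)
      rwa [invinv y] at e
    -- Right Bol
    have RB : RightBol σ := by
      intro a y z
      have e1 := E1 y (rinv h y * rinv h a) z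
      rw [lip1 y (rinv h a), anti (rinv h y) (rinv h a), invinv a, invinv y] at e1
      calc ((a * y) * z) * σ y
          = a * (rinv h a * (((a * y) * z) * σ y)) := (lip1 a _).symm
        _ = a * ((y * z) * σ y) := by rw [e1]
    -- E2' : (y*(z*s)) * (s⁻¹ * σ y) = (y*z) * σ y
    have E2' : ∀ y z s : Q, (y * (z * s)) * (rinv h s * σ y) = (y * z) * σ y := by
      intro y z s
      have e := M y (z * s) (rinv h s)
      rw [rip z s] at e
      exact e
    -- V' : ((y*z)*σy) * (σy⁻¹ * t) = y * (z*t)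
    have V' : ∀ y z t : Q, ((y * z) * σ y) * (rinv h (σ y) * t) = y * (z * t) := by
      intro y z t
      have e := E2' y z t
      have e2 : ((y * (z * t)) * (rinv h t * σ y)) * rinv h (rinv h t * σ y) = y * (z * t) :=
        rip _ _
      rw [e, anti (rinv h t) (σ y), invinv t] at e2
      exact e2
    -- E3 : σy⁻¹ * (s*v) = (σy⁻¹ * (s * y⁻¹)) * (y * v)
    have E3 : ∀ y s v : Q,
        rinv h (σ y) * (s * v) = (rinv h (σ y) * (s * rinv h y)) * (y * v) := by
      intro y s v
      have e := V' y (rinv h s) (s * v)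
      rw [lip2 s v] at e
      -- e : ((y * rinv s) * σ y) * (rinv (σ y) * (s * v)) = y * v
      have e3 : rinv h (σ y) * (s * v) =
          rinv h ((y * rinv h s) * σ y) * (y * v) :=
        loop_lcan h (e.trans (lip1 ((y * rinv h s) * σ y) (y * v)).symm)
      rw [anti (y * rinv h s) (σ y), anti y (rinv h s), invinv s] at e3
      exact e3
    -- W : ((σy*u)*y) * (y⁻¹*v) = σy * (u*v)
    have W : ∀ y u v : Q, ((σ y * u) * y) * (rinv h y * v) = σ y * (u * v) := by
      intro y u v
      have e := E3 y ((σ y * u) * y) (rinv h y * v)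
      rw [rip (σ y * u) y, lip2 (σ y) u, lip1 y v] at e
      calc ((σ y * u) * y) * (rinv h y * v)
          = σ y * (rinv h (σ y) * (((σ y * u) * y) * (rinv h y * v))) := (lip1 _ _).symm
        _ = σ y * (u * v) := by rw [e]
    -- Q : (σy⁻¹ * u) * y⁻¹ = σy⁻¹ * (u * y⁻¹)
    have Qlem : ∀ y u : Q,
        (rinv h (σ y) * u) * rinv h y = rinv h (σ y) * (u * rinv h y) := by
      intro y u
      have flex : ∀ s : Q, y * (s * σ y) = (y * s) * σ y := by
        intro s
        have e := M y 1 s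
        rwa [h.mul_one, h.one_mul] at e
      have e : rinv h ((rinv h (σ y) * u) * rinv h y) =
          rinv h (rinv h (σ y) * (u * rinv h y)) := by
        rw [anti (rinv h (σ y) * u) (rinv h y), anti (rinv h (σ y)) u,
          anti (rinv h (σ y)) (u * rinv h y), anti u (rinv h y),
          invinv y, invinv (σ y)]
        exact flex (rinv h u)
      have e2 := congrArg (rinv h) e
      rwa [invinv, invinv] at e2
    have Qplus : ∀ y b : Q,
        (rinv h (σ y) * b) * y = rinv h (σ y) * (b * y) := by
      intro y b
      have e := Qlem y (b * y)
      rw [rip b y] at e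
      calc (rinv h (σ y) * b) * y
          = ((rinv h (σ y) * (b * y)) * rinv h y) * y := by rw [e]
        _ = rinv h (σ y) * (b * y) := rip' _ y
    -- commutation : (σy * z) * y = σy * (z * y)
    have P : ∀ y z : Q, (σ y * z) * y = σ y * (z * y) := by
      intro y z
      have e := Qplus y (σ y * z)
      rw [lip2 (σ y) z] at e
      calc (σ y * z) * y
          = σ y * (rinv h (σ y) * ((σ y * z) * y)) := (lip1 (σ y) _).symm
        _ = σ y * (z * y) := by rw [← e]
    have LB : LeftBol σ := by
      intro x y z
      have w := W y z (y * x)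
      rw [lip2 y x, P y z] at w
      exact w.symm
    exact ⟨LB, RB⟩
  · -- Backward direction: LeftBol ∧ RightBol ⇒ M
    rintro ⟨LB, RB⟩
    -- left inverse property from LB
    have lip2l : ∀ x a : Q, linv h x * (x * a) = a := by
      intro x a
      have e := LB a x (linv h x)
      rw [loop_linv_mul h x, h.mul_one] at e
      exact loop_lcan h e
    -- right inverse property from RB
    have rip : ∀ a x : Q, (a * x) * rinv h x = a := by
      intro a x
      have e := RB a x (rinv h x)
      rw [loop_mul_rinv h x, h.one_mul] at e
      exact loop_rcan h e
    have lr : ∀ x : Q, linv h x = rinv h x := by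
      intro x
      have e := lip2l x (rinv h x)
      rwa [loop_mul_rinv h x, h.mul_one] at e
    have lip2 : ∀ x a : Q, rinv h x * (x * a) = a := by
      intro x a
      rw [← lr x]
      exact lip2l x a
    have lip1 : ∀ x a : Q, x * (rinv h x * a) = a := by
      intro x a
      exact loop_lcan h (lip2 x (rinv h x * a))
    have rinv_mul : ∀ x : Q, rinv h x * x = 1 := by
      intro x
      rw [← lr x]
      exact loop_linv_mul h x
    have invinv : ∀ x : Q, rinv h (rinv h x) = x := by
      intro x
      exact loop_lcan h ((loop_mul_rinv h (rinv h x)).trans (rinv_mul x).symm)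
    have rip' : ∀ a x : Q, (a * rinv h x) * x = a := by
      intro a x
      have e := rip a (rinv h x)
      rwa [invinv x] at e
    -- anti-automorphism
    have anti : ∀ a y : Q, rinv h (a * y) = rinv h y * rinv h a := by
      intro a y
      have e1 := RB a y (rinv h (a * y))
      rw [loop_mul_rinv h (a * y), h.one_mul] at e1
      have e2 := lip1 a (σ y)
      have e3 := loop_rcan h (loop_lcan h (e2.trans e1))
      -- e3 : rinv a = y * rinv (a*y)
      calc rinv h (a * y)
          = rinv h y * (y * rinv h (a * y)) := (lip2 y _).symm
        _ = rinv h y * rinv h a := by rw [← e3]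
    intro x q v
    -- G : (p * x⁻¹) * ((x*z)*σx) = (p*z)*σx
    have G : ∀ p z : Q, (p * rinv h x) * ((x * z) * σ x) = (p * z) * σ x := by
      intro p z
      have e := RB (p * rinv h x) x z
      rw [rip' p x] at e
      exact e.symm
    have key : ∀ p w : Q,
        (x * (rinv h p * w)) * σ x = (x * rinv h p) * (w * σ x) := by
      intro p w
      have e := G p (rinv h p * w)
      rw [lip1 p w] at e
      have e2 : (x * (rinv h p * w)) * σ x =
          rinv h (p * rinv h x) * (w * σ x) :=
        loop_lcan h (e.trans (lip1 (p * rinv h x) (w * σ x)).symm)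
      rw [anti p (rinv h x), invinv x] at e2
      exact e2
    have fin := key (rinv h q) v
    rw [invinv q] at fin
    exact fin.symm
end

section
/- Let (Q,·) be a loop, A(Q) a group of automorphisms of Q and (H,∘) the A-holomorph with (α,x)∘(β,y) = (αβ, (xβ)·y). Then (H,∘) has the right inverse property if and only if (Q,·) does. -/
/-- Multiplication on the A-holomorph `H = A(Q) × Q`:
`(α,x) ∘ (β,y) = (αβ, xβ · y)`, with maps acting on the right
(so composition `αβ` is `β * α` as left-action permutations). -/
def hmul {Q : Type*} [Mul Q] (A : Subgroup (Equiv.Perm Q)) (p q : A × Q) : A × Q :=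
  (q.1 * p.1, (q.1 : Equiv.Perm Q) p.2 * q.2)

/-- The A-holomorph has the right inverse property iff the loop does. -/
theorem stmt10 {Q : Type*} [Mul Q] [One Q] (h : IsLoop Q)
    (A : Subgroup (Equiv.Perm Q))
    (hA : ∀ α ∈ A, ∀ x y : Q, (α : Equiv.Perm Q) (x * y) = α x * α y) :
    (∀ p p' r : A × Q, hmul A p p' = (1, (1 : Q)) → hmul A (hmul A r p) p' = r) ↔
      (∀ x x' y : Q, x * x' = 1 → (y * x) * x' = y) := by
  constructor
  · intro H x x' y hxx'
    have := H (1, x) (1, x') (1, y) (by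
      simp [hmul, hxx'])
    simpa [hmul, Prod.ext_iff] using this
  · intro HQ p p' r hpp'
    have h1 : p'.1 * p.1 = 1 := (Prod.ext_iff.mp hpp').1
    have h2 : (p'.1 : Equiv.Perm Q) p.2 * p'.2 = 1 := (Prod.ext_iff.mp hpp').2
    have hcomp : ∀ z : Q, (p'.1 : Equiv.Perm Q) ((p.1 : Equiv.Perm Q) z) = z := by
      intro z
      have : ((p'.1 * p.1 : A) : Equiv.Perm Q) z = ((1 : A) : Equiv.Perm Q) z := by rw [h1]
      simpa using this
    simp only [hmul, Prod.ext_iff]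
    constructor
    · simp [← mul_assoc, h1]
    · rw [hA p'.1 p'.1.2, hcomp]
      exact HQ _ _ _ h2
end

section
/- In a loop with the right inverse property, if (U,V,W) is an autotopism then (W, J V J, U) is also an autotopism, where J : x ↦ x^{-1}. -/
/-- In a right inverse property loop, if `(U,V,W)` is an autotopism then so is
`(W, J V J, U)`, where `J : x ↦ x⁻¹`. -/
theorem stmt11 {Q : Type*} [Mul Q] [One Q] (h : IsLoop Q)
    (hRIP : ∀ x y : Q, (y * x) * rinv h x = y)
    (U V W : Equiv.Perm Q) (hUVW : Autotopism U V W) :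
    ∀ a b : Q, W a * rinv h (V (rinv h b)) = U (a * b) := by
  intro a b
  have h1 : W a = U (a * b) * V (rinv h b) := by
    have h2 := hUVW (a * b) (rinv h b)
    rw [hRIP b a] at h2
    exact h2.symm
  rw [h1, hRIP]
end

section
/- Let (Q,·) be a loop with self-map σ, A(Q) a group of automorphisms, (H,∘) the A-holomorph, and σ' : H → H given by σ'(α,x) = (α, σ(x)). Then (H,∘) is a σ'-generalized Bol loop if and only if for all x ∈ Q and all α,γ ∈ A(Q), the triple (R_x^{-1}, L_x R_{σ(xγ^{-1})α^{-1}}, R_{σ(xγ^{-1})α^{-1}}) is an autotopism of (Q,·). -/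
/-- The A-holomorph `(H,∘)` with `σ'(α,x) = (α, σ(x))` is a σ'-generalized Bol
loop iff `(R_x⁻¹, L_x R_{σ(xγ⁻¹)α⁻¹}, R_{σ(xγ⁻¹)α⁻¹})` is an autotopism of `Q`
for all `x ∈ Q` and all `α, γ ∈ A(Q)`. -/
theorem stmt12 {Q : Type*} [Mul Q] [One Q] (h : IsLoop Q)
    (A : Subgroup (Equiv.Perm Q))
    (hA : ∀ α ∈ A, ∀ x y : Q, (α : Equiv.Perm Q) (x * y) = α x * α y)
    (σ : Q → Q) :
    (∀ p q r : A × Q,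
        hmul A (hmul A (hmul A p q) r) (q.1, σ q.2) =
          hmul A p (hmul A (hmul A q r) (q.1, σ q.2))) ↔
      ∀ (x : Q) (α γ : A) (a b : Q),
        (Rt h x).symm a * ((x * b) * ((α : Equiv.Perm Q)⁻¹ (σ ((γ : Equiv.Perm Q)⁻¹ x)))) =
          (a * b) * ((α : Equiv.Perm Q)⁻¹ (σ ((γ : Equiv.Perm Q)⁻¹ x))) := by
  have rt_apply : ∀ (x u : Q), (Rt h x) u = u * x := fun _ _ => rfl
  have rt_symm : ∀ (x u : Q), (Rt h x).symm (u * x) = u := by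
    intro x u
    have := (Rt h x).symm_apply_apply u
    rwa [rt_apply] at this
  constructor
  · intro Hc x α γ a b
    -- The key identity extracted from the holomorph condition
    have star : ∀ (δ : A) (q2 u w : Q),
        ((u * (δ : Equiv.Perm Q) q2) * w) * σ q2
          = u * (((δ : Equiv.Perm Q) q2 * w) * σ q2) := by
      intro δ q2 u w
      have key := congrArg Prod.snd
        (Hc (1, ((δ : Equiv.Perm Q)⁻¹ u)) (1, q2) (δ, w))
      simp only [hmul, OneMemClass.coe_one, Equiv.Perm.coe_one, id_eq,
        Equiv.Perm.one_apply, one_mul, mul_one] at key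
      rw [hA _ δ.2, (show ∀ (f : Equiv.Perm Q) (x : Q), f (f⁻¹ x) = x from fun f x => f.apply_symm_apply x)] at key
      simpa using key
    set u := (Rt h x).symm a with hu
    have hux : u * x = a := by
      have := (Rt h x).apply_symm_apply a
      rwa [rt_apply] at this
    apply (α : Equiv.Perm Q).injective
    have hαinv : ((α : Equiv.Perm Q)⁻¹ : Equiv.Perm Q) ∈ A := A.inv_mem α.2
    rw [hA _ α.2, hA _ α.2, hA _ α.2, hA _ α.2, (show ∀ (f : Equiv.Perm Q) (x : Q), f (f⁻¹ x) = x from fun f x => f.apply_symm_apply x)]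
    have hs := star (α * γ) (((γ : Equiv.Perm Q)⁻¹) x)
      ((α : Equiv.Perm Q) u) ((α : Equiv.Perm Q) b)
    have hval : ((α * γ : A) : Equiv.Perm Q) (((γ : Equiv.Perm Q)⁻¹) x)
        = (α : Equiv.Perm Q) x := by
      simp [Equiv.Perm.mul_apply]
    rw [hval] at hs
    rw [← hs, ← hA _ α.2, hux, hA _ α.2]
  · intro Ht p q r
    obtain ⟨p1, p2⟩ := p
    obtain ⟨q1, q2⟩ := q
    obtain ⟨r1, r2⟩ := r
    refine Prod.ext ?_ ?_
    · simp [hmul, mul_assoc]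
    · simp only [hmul]
      set u : Q := (q1 : Equiv.Perm Q) ((r1 : Equiv.Perm Q) ((q1 : Equiv.Perm Q) p2)) with hud
      set v : Q := (q1 : Equiv.Perm Q) ((r1 : Equiv.Perm Q) q2) with hvd
      set w : Q := (q1 : Equiv.Perm Q) r2 with hwd
      have hL : (q1 : Equiv.Perm Q) ((r1 : Equiv.Perm Q) ((q1 : Equiv.Perm Q) p2 * q2) * r2)
          = (u * v) * w := by
        rw [hA _ r1.2, hA _ q1.2, hA _ q1.2]
      have hR : (q1 : Equiv.Perm Q) ((r1 : Equiv.Perm Q) q2 * r2) = v * w := by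
        rw [hA _ q1.2]
      have happ : ((q1 * (r1 * q1) : A) : Equiv.Perm Q) p2 = u := by
        simp [hud, Equiv.Perm.mul_apply]
      rw [hL, hR, happ]
      have ht := Ht v 1 (q1 * r1) (u * v) w
      have h1 : (((1 : A) : Equiv.Perm Q))⁻¹ (σ ((((q1 * r1 : A) : Equiv.Perm Q))⁻¹ v))
          = σ q2 := by
        simp [hvd, (show ∀ (f : Equiv.Perm Q) (x : Q), f⁻¹ (f x) = x from fun f x => f.symm_apply_apply x)]
      rw [rt_symm, h1] at ht
      rw [ht]
end

section
/- With notation as above, the A-holomorph (H,∘) with σ'(α,x) = (α,σ(x)) is a σ'-generalized Bol loop if and only if (Q,·) is an (α^{-1}σγ^{-1})-generalized Bol loop for all α,γ ∈ A(Q), where α^{-1}σγ^{-1} denotes the self-map x ↦ ((σ(xγ^{-1}))α^{-1}. -/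
/-- The A-holomorph with `σ'(α,x) = (α, σ(x))` is a σ'-generalized Bol loop iff
`Q` is an `(α⁻¹ σ γ⁻¹)`-generalized Bol loop for all `α, γ ∈ A(Q)`. -/
theorem stmt13 {Q : Type*} [Mul Q] [One Q] (h : IsLoop Q)
    (A : Subgroup (Equiv.Perm Q))
    (hA : ∀ α ∈ A, ∀ x y : Q, (α : Equiv.Perm Q) (x * y) = α x * α y)
    (σ : Q → Q) :
    (∀ p q r : A × Q,
        hmul A (hmul A (hmul A p q) r) (q.1, σ q.2) =
          hmul A p (hmul A (hmul A q r) (q.1, σ q.2))) ↔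
      ∀ α γ : A,
        RightBol (fun x : Q => (α : Equiv.Perm Q)⁻¹ (σ ((γ : Equiv.Perm Q)⁻¹ x))) := by
  constructor
  · intro Hol α γ x y z
    have hα := hA α α.2
    have hγ := hA γ γ.2
    have key := congrArg Prod.snd
      (Hol ((1 : A), (α : Equiv.Perm Q)⁻¹ ((γ : Equiv.Perm Q)⁻¹ x))
           (α, (γ : Equiv.Perm Q)⁻¹ y) (γ, z))
    simp only [hmul, Subgroup.coe_mul, Equiv.Perm.mul_apply, Equiv.Perm.coe_inv, Equiv.apply_symm_apply] at key
    apply (α : Equiv.Perm Q).injective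
    simp only [hα, hγ, Equiv.Perm.coe_inv, Equiv.apply_symm_apply]
    simp only [hγ, hα, Equiv.Perm.coe_inv, Equiv.apply_symm_apply] at key
    exact key
  · rintro RB ⟨a, x⟩ ⟨b, y⟩ ⟨c, z⟩
    have hb := hA b b.2
    have hc := hA c c.2
    have key := RB 1 (b * c) ((b : Equiv.Perm Q) ((c : Equiv.Perm Q) ((b : Equiv.Perm Q) x)))
      ((b : Equiv.Perm Q) ((c : Equiv.Perm Q) y)) ((b : Equiv.Perm Q) z)
    simp only [OneMemClass.coe_one, inv_one, Equiv.Perm.one_apply, Subgroup.coe_mul,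
      mul_inv_rev, Equiv.Perm.mul_apply, Equiv.Perm.coe_inv, Equiv.symm_apply_apply] at key
    simp only [hmul, Subgroup.coe_mul, Equiv.Perm.mul_apply, hb, hc, Prod.mk.injEq]
    exact ⟨by group, key⟩
end

section
/- Let (Q,·) be a σ-generalized Bol loop and let α ∈ BS(Q,·) (the Bryant–Schneider group) with α = ψ R_x for some x ∈ Q and bijection ψ fixing the identity e. Then ψ is a pseudo-automorphism of (Q,·) with companion (x·g^{-1})·σ(x) for some g ∈ Q; moreover ψ and x are uniquely determined by α. -/
section helpers
variable {Q : Type*} [Mul Q] [One Q]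

lemma lmul_ldiv (h : IsLoop Q) (a u : Q) : a * (Lt h a).symm u = u :=
  (Lt h a).apply_symm_apply u

lemma rdiv_rmul_self (h : IsLoop Q) (a u : Q) : (Rt h a).symm u * a = u :=
  (Rt h a).apply_symm_apply u

lemma rdiv_rmul (h : IsLoop Q) (a u : Q) : (Rt h a).symm (u * a) = u :=
  (Rt h a).symm_apply_apply u

lemma rinv_linv (h : IsLoop Q) (t : Q) : rinv h (linv h t) = t := by
  unfold rinv
  rw [Equiv.symm_apply_eq]
  exact (rdiv_rmul_self h t 1).symm

end helpers

/-- In a σ-generalized Bol loop, if `α ∈ BS(Q,·)` factors as `α = ψ R_x` with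
`ψ` fixing the identity, then `ψ` is a pseudo-automorphism with companion
`(x·g⁻¹)·σ(x)` for some `g`, and `ψ`, `x` are uniquely determined by `α`. -/
theorem stmt15 {Q : Type*} [Mul Q] [One Q] (h : IsLoop Q) (σ : Q → Q)
    (hB : RightBol σ) (α : Equiv.Perm Q)
    (hBS : ∃ f g : Q, ∀ a b : Q,
      (Rt h g).symm (α a) * (Lt h f).symm (α b) = α (a * b))
    (ψ : Equiv.Perm Q) (x : Q) (hψ : ψ 1 = 1)
    (hdec : ∀ y : Q, α y = ψ y * x) :
    (∃ g : Q, ∀ a b : Q,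
        ψ a * (ψ b * ((x * rinv h g) * σ x)) = ψ (a * b) * ((x * rinv h g) * σ x)) ∧
      (∀ (ψ' : Equiv.Perm Q) (x' : Q), ψ' 1 = 1 → (∀ y : Q, α y = ψ' y * x') →
        ψ' = ψ ∧ x' = x) := by
  obtain ⟨f, g, hT⟩ := hBS
  have hα1 : α 1 = x := by rw [hdec, hψ, h.one_mul]
  -- E2': (w*z)*σy = (w/y)*((y*z)*σy)
  have hE2' : ∀ w y z : Q, (w * z) * σ y = (Rt h y).symm w * ((y * z) * σ y) := by
    intro w y z
    have := hB ((Rt h y).symm w) y z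
    rwa [rdiv_rmul_self h y w] at this
  -- inverse Bol autotopism at g
  have hSg : ∀ u v : Q,
      (u * g) * (Lt h g).symm ((Rt h (σ g)).symm v) = (Rt h (σ g)).symm (u * v) := by
    intro u v
    have h1 := hE2' (u * g) g ((Lt h g).symm ((Rt h (σ g)).symm v))
    rw [rdiv_rmul h g u, lmul_ldiv h g, rdiv_rmul_self h (σ g) v] at h1
    rw [← h1, rdiv_rmul h (σ g)]
  -- combined autotopism (ψ, B', C')
  set Bf : Q → Q := fun b =>
    (x * (Lt h g).symm ((Rt h (σ g)).symm ((Lt h f).symm (α b)))) * σ x with hBf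
  set Cf : Q → Q := fun b => (Rt h (σ g)).symm (α b) * σ x with hCf
  have hstar : ∀ a b : Q, ψ a * Bf b = Cf (a * b) := by
    intro a b
    have h1 := hSg ((Rt h g).symm (α a)) ((Lt h f).symm (α b))
    rw [hT a b, rdiv_rmul_self h g (α a)] at h1
    have h2 := hE2' (α a) x ((Lt h g).symm ((Rt h (σ g)).symm ((Lt h f).symm (α b))))
    rw [h1] at h2
    have h3 : (Rt h x).symm (α a) = ψ a := by rw [hdec a, rdiv_rmul h x]
    rw [h3] at h2
    exact h2.symm
  have hBC : ∀ b, Bf b = Cf b := by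
    intro b
    have := hstar 1 b
    rwa [hψ, h.one_mul, h.one_mul] at this
  set c : Q := Cf 1 with hc
  have hcomp : ∀ a, Cf a = ψ a * c := by
    intro a
    have h1 := hstar a 1
    rw [h.mul_one, hBC 1] at h1
    exact h1.symm
  constructor
  · -- choose g' with (x * rinv g')*σx = c
    refine ⟨linv h ((Lt h x).symm ((Rt h (σ g)).symm x)), ?_⟩
    have hcval : (x * rinv h (linv h ((Lt h x).symm ((Rt h (σ g)).symm x)))) * σ x = c := by
      rw [rinv_linv, lmul_ldiv]
      simp only [hc, hCf, hα1]
    intro a b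
    rw [hcval, ← hcomp b, ← hBC b, hstar a b, hcomp (a * b)]
  · intro ψ' x' hψ' hdec'
    have hx' : x' = x := by
      have h1 := hdec' 1
      rw [hψ', h.one_mul] at h1
      rw [← h1, hα1]
    subst hx'
    constructor
    · ext y
      have h1 := (hdec y).symm.trans (hdec' y)
      exact (h.rbij x').injective h1.symm
    · rfl
end

section
/- Let (Q,·) be a σ-generalized Bol loop satisfying σ(x^{-1}) = (σ(x))^{-1} and the σ-flexible law (x·y)·σ(x) = x·(y·σ(x)) for all x,y. If α ∈ BS(Q,·) and α = ψ R_x^{-1} with ψ fixing the identity, then ψ is a pseudo-automorphism with companion (x^{-1}·g^{-1})·(σ(x))^{-1} for some g ∈ Q. -/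
/-- In a σ-generalized Bol loop with `σ(x⁻¹) = σ(x)⁻¹` and the σ-flexible law,
if `α = ψ R_x⁻¹ ∈ BS(Q,·)` with `ψ` fixing the identity, then `ψ` is a
pseudo-automorphism with companion `(x⁻¹·g⁻¹)·σ(x)⁻¹` for some `g`. -/
theorem stmt17 {Q : Type*} [Mul Q] [One Q] (h : IsLoop Q) (σ : Q → Q)
    (hB : RightBol σ)
    (hσinv : ∀ x : Q, σ (rinv h x) = rinv h (σ x))
    (hflex : ∀ x y : Q, (x * y) * σ x = x * (y * σ x))
    (α : Equiv.Perm Q)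
    (hBS : ∃ f g : Q, ∀ a b : Q,
      (Rt h g).symm (α a) * (Lt h f).symm (α b) = α (a * b))
    (ψ : Equiv.Perm Q) (x : Q) (hψ : ψ 1 = 1)
    (hdec : ∀ y : Q, α y = (Rt h x).symm (ψ y)) :
    ∃ g : Q, ∀ a b : Q,
      ψ a * (ψ b * ((rinv h x * rinv h g) * rinv h (σ x))) =
        ψ (a * b) * ((rinv h x * rinv h g) * rinv h (σ x)) := by
  obtain ⟨f, g, hfg⟩ := hBS
  have mul_rinv : ∀ q : Q, q * rinv h q = 1 := fun q => (Lt h q).apply_symm_apply 1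
  have rip1 : ∀ u q : Q, (u * q) * rinv h q = u := by
    intro u q
    have hb := hB u q (rinv h q)
    rw [mul_rinv q, h.one_mul] at hb
    exact (h.rbij (σ q)).1 hb
  have rip2 : ∀ u q : Q, (u * rinv h q) * q = u := by
    intro u q
    exact (h.rbij (rinv h q)).1 (rip1 (u * rinv h q) q)
  have rsymm : ∀ q y : Q, (Rt h q).symm y = y * rinv h q := by
    intro q y
    exact (Rt h q).symm_apply_eq.mpr (rip2 y q).symm
  have key : ∀ a b : Q,
      ((ψ a * rinv h x) * rinv h g) * (Lt h f).symm (ψ b * rinv h x) =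
        ψ (a * b) * rinv h x := by
    intro a b
    have hk := hfg a b
    simp only [hdec, rsymm] at hk
    exact hk
  have step : ∀ q p z W : Q, p * z = W →
      (p * q) * (Lt h q).symm (z * rinv h (σ q)) = W * rinv h (σ q) := by
    intro q p z W hpz
    have hgz : q * (Lt h q).symm (z * rinv h (σ q)) = z * rinv h (σ q) :=
      (Lt h q).apply_symm_apply _
    have hbol := hB p q ((Lt h q).symm (z * rinv h (σ q)))
    rw [hgz, rip2, hpz] at hbol
    have h2 : (((p * q) * (Lt h q).symm (z * rinv h (σ q))) * σ q) * rinv h (σ q) =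
        W * rinv h (σ q) := by rw [hbol]
    rwa [rip1] at h2
  have main : ∀ b : Q, ∃ V : Q, ∀ a : Q,
      ψ a * V = ((ψ (a * b) * rinv h x) * rinv h (σ g)) * rinv h (σ x) := by
    intro b
    refine ⟨(Lt h x).symm ((Lt h g).symm
      ((Lt h f).symm (ψ b * rinv h x) * rinv h (σ g)) * rinv h (σ x)), ?_⟩
    intro a
    have h2 := step g ((ψ a * rinv h x) * rinv h g)
      ((Lt h f).symm (ψ b * rinv h x)) _ (key a b)
    rw [rip2] at h2
    have h3 := step x (ψ a * rinv h x)
      ((Lt h g).symm ((Lt h f).symm (ψ b * rinv h x) * rinv h (σ g))) _ h2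
    rw [rip2] at h3
    exact h3
  have hDt : ∀ u : Q, ((u * rinv h x) * rinv h (σ g)) * rinv h (σ x) =
      u * ((rinv h x * rinv h (σ g)) * rinv h (σ x)) := by
    intro u
    have hb := hB u (rinv h x) (rinv h (σ g))
    rwa [hσinv x] at hb
  refine ⟨σ g, ?_⟩
  intro a b
  obtain ⟨V, hV⟩ := main b
  have hV1 := hV 1
  rw [hψ, h.one_mul, h.one_mul] at hV1
  have hab := hV a
  rw [hV1, hDt (ψ b), hDt (ψ (a * b))] at hab
  exact hab
end
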